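/- Let Q be a type with a binary operation ▷ satisfying the involutory quandle identities Q1: x ▷ x = x, Q2': (x ▷ y) ▷ y = x, and Q3: (x ▷ z) ▷ (y ▷ z) = (x ▷ y) ▷ z for all x, y, z ∈ Q. If elements a1, …, a10 ∈ Q satisfy the culprit relations a1 = a9 ▷ a7, a3 = a1 ▷ a2, a2 = a3 ▷ a4, a5 = a2 ▷ a10, a6 = a5 ▷ a4, a7 = a6 ▷ a1, a8 = a7 ▷ a4, a10 = a8 ▷ a9, a4 = a10 ▷ a3, a9 = a4 ▷ a8, then a1 = a2, a2 = a3, a3 = a4, a4 = a5, a5 = a6, a6 = a7, a7 = a8, a8 = a9, and a9 = a10 (i.e. all ten elements are equal). -/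

import Mathlib

theorem culprit_unknot (Q : Type*) (op : Q → Q → Q)
    (Q1 : ∀ x : Q, op x x = x)
    (Q2' : ∀ x y : Q, op (op x y) y = x)
    (Q3 : ∀ x y z : Q, op (op x z) (op y z) = op (op x y) z)
    (a1 a2 a3 a4 a5 a6 a7 a8 a9 a10 : Q)
    (h1 : a1 = op a9 a7) (h2 : a3 = op a1 a2) (h3 : a2 = op a3 a4)
    (h4 : a5 = op a2 a10) (h5 : a6 = op a5 a4) (h6 : a7 = op a6 a1)
    (h7 : a8 = op a7 a4) (h8 : a10 = op a8 a9) (h9 : a4 = op a10 a3)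
    (h10 : a9 = op a4 a8) :
    a1 = a2 ∧ a2 = a3 ∧ a3 = a4 ∧ a4 = a5 ∧ a5 = a6 ∧ a6 = a7 ∧
    a7 = a8 ∧ a8 = a9 ∧ a9 = a10 := by
  have i0 := Q3 (op a10 a3) (op a7 a4) a7
  have i1 := Q3 (op a9 a7) (op (op a1 a2) a4) a4
  have i2 := Q3 (op (op a10 a3) a7) (op a8 a7) a2
  have i3 := Q2' (op (op a9 a7) a2) a4
  have i4 := Q3 (op a4 a7) a2 (op (op a8 a7) a2)
  have i5 := Q3 (op a6 a1) (op a10 a3) a7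
  have i6 := Q1 a7
  have i7 := Q3 (op a10 a3) a7 a4
  have i8 := Q3 (op a4 a8) (op (op a5 a4) a1) a4
  have i9 := Q3 (op a4 a8) a4 (op a7 a4)
  have i10 := Q3 a4 a8 a4
  have i11 := Q1 a4
  have i12 := Q3 (op (op a7 a4) a9) a3 a4
  have i13 := Q2' (op (op a7 a4) a9) a3
  have i14 := Q3 (op a10 a3) a9 a3
  have i15 := Q3 a8 (op a4 a8) a4
  have i16 := Q2' (op a6 a1) a4
  have i17 := Q2' (op a10 a3) a8
  clear Q1 Q2' Q3
  refine ⟨?_,?_,?_,?_,?_,?_,?_,?_,?_⟩ <;> grind
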